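/- The cover pebbling number of the path on n vertices is 2^n − 1. -/

import Mathlib

open SimpleGraph

variable {V : Type*}

/-- A single pebbling move: remove two pebbles from `u`, add one to a neighbor `v`. -/
def PebblingMove (G : SimpleGraph V) (c c' : V → ℕ) : Prop :=
  ∃ u v, G.Adj u v ∧ 2 ≤ c u ∧
    c' u = c u - 2 ∧ c' v = c v + 1 ∧ ∀ w, w ≠ u → w ≠ v → c' w = c w

/-- `c'` is reachable from `c` by a sequence of pebbling moves. -/
def PebblingReach (G : SimpleGraph V) (c c' : V → ℕ) : Prop :=
  Relation.ReflTransGen (PebblingMove G) c c'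

/-- A configuration is `t`-fold `r`-solvable if some sequence of pebbling moves
places at least `t` pebbles on `r`. -/
def PebblingSolvable (G : SimpleGraph V) (c : V → ℕ) (r : V) (t : ℕ) : Prop :=
  ∃ c', PebblingReach G c c' ∧ t ≤ c' r

variable [Fintype V]

/-- The set of sizes `m` such that every configuration of size `m` is
`t`-fold `r`-solvable for every target `r`. -/
def pebblingSet (G : SimpleGraph V) (t : ℕ) : Set ℕ :=
  {m | ∀ c : V → ℕ, (∑ v, c v) = m → ∀ r : V, PebblingSolvable G c r t}

/-- The `t`-fold pebbling number, as an extended natural number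
(`⊤` when no bound exists, e.g. for disconnected graphs). -/
noncomputable def pebblingNumber (G : SimpleGraph V) (t : ℕ) : ℕ∞ :=
  sInf ((↑) '' pebblingSet G t)

/-- A configuration is cover-solvable if pebbling moves can reach a configuration
with at least one pebble on every vertex. -/
def IsCoverSolvable (G : SimpleGraph V) (c : V → ℕ) : Prop :=
  ∃ c', PebblingReach G c c' ∧ ∀ v : V, 1 ≤ c' v

/-- The cover pebbling number. -/
noncomputable def coverPebblingNumber (G : SimpleGraph V) : ℕ∞ :=
  sInf ((↑) '' {m : ℕ | ∀ c : V → ℕ, (∑ v, c v) = m → IsCoverSolvable G c})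

/-- The optimal pebbling number: the least size of a single configuration that is
`r`-solvable for every vertex `r`. -/
noncomputable def optimalPebblingNumber (G : SimpleGraph V) : ℕ∞ :=
  sInf ((↑) '' {m : ℕ | ∃ c : V → ℕ, (∑ v, c v) = m ∧ ∀ r : V, PebblingSolvable G c r 1})

lemma reach_shift {W : Type*} [DecidableEq W] (G : SimpleGraph W) (u v : W) (huv : G.Adj u v)
    (k : ℕ) : ∀ c : W → ℕ, 2 * k ≤ c u →
    ∃ c', PebblingReach G c c' ∧ c' u = c u - 2 * k ∧ c' v = c v + k ∧
      ∀ w, w ≠ u → w ≠ v → c' w = c w := by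
  induction k with
  | zero => intro c _; exact ⟨c, Relation.ReflTransGen.refl, by omega, by omega, fun _ _ _ => rfl⟩
  | succ k ih =>
    intro c hc
    have hne : u ≠ v := G.ne_of_adj huv
    set c₁ : W → ℕ := fun w => if w = u then c u - 2 else if w = v then c v + 1 else c w with hc₁
    have hmove : PebblingMove G c c₁ := by
      refine ⟨u, v, huv, by omega, by simp [hc₁], ?_, ?_⟩
      · simp [hc₁, hne.symm]
      · intro w h1 h2; simp [hc₁, h1, h2]
    obtain ⟨c', hr, h1, h2, h3⟩ := ih c₁ (by simp [hc₁]; omega)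
    refine ⟨c', Relation.ReflTransGen.head hmove hr, ?_, ?_, ?_⟩
    · rw [h1]; simp [hc₁]; omega
    · rw [h2]; simp [hc₁, hne.symm]; omega
    · intro w hw1 hw2; rw [h3 w hw1 hw2]; simp [hc₁, hw1, hw2]

lemma sum_pair_congr {W : Type*} [Fintype W] [DecidableEq W] (f g : W → ℕ) (u v : W)
    (huv : u ≠ v) (h : ∀ w, w ≠ u → w ≠ v → f w = g w) :
    ∑ w, f w + (g u + g v) = ∑ w, g w + (f u + f v) := by
  classical
  have hv : v ∈ Finset.univ.erase u := Finset.mem_erase.2 ⟨huv.symm, Finset.mem_univ v⟩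
  have key : ∀ F : W → ℕ, ∑ w, F w =
      ∑ w ∈ (Finset.univ.erase u).erase v, F w + F v + F u := by
    intro F
    rw [Finset.sum_erase_add _ _ hv, Finset.sum_erase_add _ _ (Finset.mem_univ u)]
  have hcong : ∑ w ∈ (Finset.univ.erase u).erase v, f w =
      ∑ w ∈ (Finset.univ.erase u).erase v, g w := by
    apply Finset.sum_congr rfl
    intro w hw
    simp only [Finset.mem_erase] at hw
    exact h w hw.2.1 hw.1
  rw [key f, key g, hcong]; omega

lemma weight_move {n : ℕ} {c c' : Fin n → ℕ} (h : PebblingMove (pathGraph n) c c') :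
    ∑ v, c' v * 2 ^ (v : ℕ) ≤ ∑ v, c v * 2 ^ (v : ℕ) := by
  obtain ⟨u, v, huv, h2, hu, hv, hw⟩ := h
  have hne : u ≠ v := (pathGraph n).ne_of_adj huv
  have hpow : 2 ^ (v : ℕ) ≤ 2 * 2 ^ (u : ℕ) := by
    rw [pathGraph_adj] at huv
    have : (v : ℕ) ≤ (u : ℕ) + 1 := by omega
    calc 2 ^ (v : ℕ) ≤ 2 ^ ((u : ℕ) + 1) := Nat.pow_le_pow_right (by norm_num) this
    _ = 2 * 2 ^ (u : ℕ) := by rw [pow_succ]; ring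
  have key := sum_pair_congr (fun w => c' w * 2 ^ (w : ℕ)) (fun w => c w * 2 ^ (w : ℕ)) u v hne
    (fun w h1 h2 => show c' w * 2 ^ (w:ℕ) = c w * 2 ^ (w:ℕ) by rw [hw w h1 h2])
  have e1 : c u * 2 ^ (u : ℕ) = c' u * 2 ^ (u : ℕ) + 2 * 2 ^ (u : ℕ) := by
    rw [hu, ← add_mul, Nat.sub_add_cancel h2]
  have e2 : c' v * 2 ^ (v : ℕ) = c v * 2 ^ (v : ℕ) + 2 ^ (v : ℕ) := by
    rw [hv, add_mul, one_mul]
  rw [e1, e2] at key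
  linarith [key, hpow]

lemma weight_reach {n : ℕ} {c c' : Fin n → ℕ} (h : PebblingReach (pathGraph n) c c') :
    ∑ v, c' v * 2 ^ (v : ℕ) ≤ ∑ v, c v * 2 ^ (v : ℕ) := by
  induction h with
  | refl => exact le_rfl
  | tail _ hmove ih => exact le_trans (weight_move hmove) ih

lemma sum_two_pow (n : ℕ) : ∑ i ∈ Finset.range n, 2 ^ i = 2 ^ n - 1 := by
  induction n with
  | zero => simp
  | succ k ih =>
    rw [Finset.sum_range_succ, ih]
    have : 1 ≤ 2 ^ k := Nat.one_le_two_pow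
    rw [pow_succ]; omega

lemma not_solvable {n m : ℕ} (hm : m ≤ 2 ^ (n + 1) - 2)
    {c' : Fin (n+1) → ℕ}
    (hr : PebblingReach (pathGraph (n+1)) (fun v => if v = 0 then m else 0) c') :
    ¬ ∀ v, 1 ≤ c' v := by
  intro hcov
  have h1 := weight_reach hr
  have h2 : ∑ v : Fin (n+1), (if v = 0 then m else 0) * 2 ^ (v : ℕ) = m := by
    simp [ite_mul]
  have h3 : ∑ v : Fin (n+1), 1 * 2 ^ (v : ℕ) ≤ ∑ v, c' v * 2 ^ (v : ℕ) :=
    Finset.sum_le_sum (fun v _ => Nat.mul_le_mul_right _ (hcov v))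
  have h4 : ∑ v : Fin (n+1), 1 * 2 ^ (v : ℕ) = 2 ^ (n + 1) - 1 := by
    simp only [one_mul]
    rw [Fin.sum_univ_eq_sum_range (fun i => 2 ^ i)]
    exact sum_two_pow (n + 1)
  have h5 : 2 ≤ 2 ^ (n + 1) := by
    have : 2 ^ 1 ≤ 2 ^ (n + 1) := Nat.pow_le_pow_right (by norm_num) (by omega)
    simpa using this
  omega

-- lift lemma

lemma move_lift {n : ℕ} (a : ℕ) {d d' : Fin (n+1) → ℕ}
    (h : PebblingMove (pathGraph (n+1)) d d') :
    PebblingMove (pathGraph (n+2)) (fun v => Fin.cases a d v) (fun v => Fin.cases a d' v) := by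
  obtain ⟨u, v, huv, h2, hu, hv, hw⟩ := h
  refine ⟨u.succ, v.succ, ?_, by simpa using h2, by simpa using hu, by simpa using hv, ?_⟩
  · rw [pathGraph_adj] at huv ⊢
    simp only [Fin.val_succ]
    omega
  · intro w hw1 hw2
    induction w using Fin.cases with
    | zero => simp
    | succ i =>
      have h1 : i ≠ u := fun h => hw1 (by rw [h])
      have h2' : i ≠ v := fun h => hw2 (by rw [h])
      simpa using hw i h1 h2'

lemma reach_lift {n : ℕ} (a : ℕ) {d d' : Fin (n+1) → ℕ}
    (h : PebblingReach (pathGraph (n+1)) d d') :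
    PebblingReach (pathGraph (n+2)) (fun v => Fin.cases a d v) (fun v => Fin.cases a d' v) :=
by
  let f : (Fin (n+1) → ℕ) → (Fin (n+2) → ℕ) := fun e v => Fin.cases a e v
  exact Relation.ReflTransGen.lift f (fun _ _ hm => move_lift a hm) _ _ h

lemma main_lemma (n : ℕ) : ∀ t : ℕ, 1 ≤ t → ∀ c : Fin (n+1) → ℕ,
    2 ^ n * (t + 1) - 1 ≤ ∑ v, c v →
    ∃ c', PebblingReach (pathGraph (n+1)) c c' ∧ t ≤ c' 0 ∧ ∀ v, 1 ≤ c' v := by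
  induction n with
  | zero =>
    intro t ht c hc
    rw [Fin.sum_univ_one] at hc
    simp only [pow_zero, one_mul] at hc
    refine ⟨c, Relation.ReflTransGen.refl, by omega, ?_⟩
    intro v
    have hv : v = 0 := Fin.ext (by have := v.isLt; simp only [Fin.val_zero]; omega)
    rw [hv]; omega
  | succ n ih =>
    intro t ht c hc
    replace hc : 2 ^ (n+1) * (t + 1) - 1 ≤ ∑ v : Fin (n+2), c v := hc
    have hA : 1 ≤ 2 ^ n := Nat.one_le_two_pow
    have hsum : ∑ v : Fin (n+2), c v = c 0 + ∑ i : Fin (n+1), c i.succ := Fin.sum_univ_succ c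
    have hpow : (2:ℕ) ^ (n+1) = 2 * 2 ^ n := by rw [pow_succ]; ring
    have adj01 : (pathGraph (n+2)).Adj 0 1 := by
      rw [pathGraph_adj]; left; simp
    by_cases hct : t ≤ c 0
    · -- move surplus from 0 to 1
      obtain ⟨k, hk⟩ : ∃ k, c 0 - t = 2 * k ∨ c 0 - t = 2 * k + 1 := by
        rcases Nat.even_or_odd (c 0 - t) with ⟨m, hm⟩ | ⟨m, hm⟩
        · exact ⟨m, Or.inl (by omega)⟩
        · exact ⟨m, Or.inr hm⟩
      obtain ⟨c₁, hr1, h1u, h1v, h1w⟩ :=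
        reach_shift (pathGraph (n+2)) 0 1 adj01 k c (by omega)
      have hne01 : (0 : Fin (n+2)) ≠ 1 := by simp
      have hpair := sum_pair_congr c₁ c 0 1 hne01 h1w
      have hsum1 : ∑ v : Fin (n+2), c₁ v = c₁ 0 + ∑ i : Fin (n+1), c₁ i.succ :=
        Fin.sum_univ_succ c₁
      have hst : t ≤ 2 ^ n * t := Nat.le_mul_of_pos_left t hA
      have hAs : 2 ^ n ≤ 2 ^ n * t := Nat.le_mul_of_pos_right _ (by omega)
      have hAt : 2 ^ n + t ≤ 2 ^ n * t + 1 := by nlinarith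
      have hexp : 2 ^ (n+1) * (t + 1) = 2 * (2 ^ n * t) + 2 * 2 ^ n := by rw [hpow]; ring
      have hd : 2 ^ n * (1 + 1) - 1 ≤ ∑ i : Fin (n+1), c₁ i.succ := by
        rw [hexp] at hc; omega
      obtain ⟨d', hr2, hd0, hdall⟩ := ih 1 le_rfl _ hd
      have hc1eq : c₁ = fun v => Fin.cases (c₁ 0) (fun i => c₁ i.succ) v := by
        funext v
        induction v using Fin.cases with
        | zero => simp
        | succ i => simp
      refine ⟨fun v => Fin.cases (c₁ 0) d' v, ?_, ?_, ?_⟩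
      · refine hr1.trans ?_
        rw [hc1eq]
        exact reach_lift (c₁ 0) hr2
      · simpa using (by omega : t ≤ c₁ 0)
      · intro v
        induction v using Fin.cases with
        | zero => simpa using (by omega : 1 ≤ c₁ 0)
        | succ i => simpa using hdall i
    · -- ship t - c 0 pebbles from vertex 1 to vertex 0
      push_neg at hct
      have hshipc : c 0 ≤ 2 ^ (n+1) * c 0 := Nat.le_mul_of_pos_left _ (by positivity)
      have hexp2 : 2 ^ n * (2 * (t - c 0) + 1 + 1) + 2 ^ (n+1) * c 0 =
          2 ^ (n+1) * (t + 1) := by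
        have h1 : t + 1 = (t - c 0 + 1) + c 0 := by omega
        rw [h1, hpow]
        have h2 : 2 * (t - c 0) + 1 + 1 = 2 * (t - c 0 + 1) := by omega
        rw [h2]; ring
      rw [← hexp2] at hc
      have hd : 2 ^ n * (2 * (t - c 0) + 1 + 1) - 1 ≤ ∑ i : Fin (n+1), c i.succ := by
        omega
      obtain ⟨d', hr2, hd0, hdall⟩ := ih (2 * (t - c 0) + 1) (by omega) _ hd
      have hceq : c = fun v => Fin.cases (c 0) (fun i => c i.succ) v := by
        funext v
        induction v using Fin.cases with
        | zero => simp
        | succ i => simp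
      set c₂ : Fin (n+2) → ℕ := fun v => Fin.cases (c 0) d' v with hc₂def
      have hr2' : PebblingReach (pathGraph (n+2)) c c₂ := by
        rw [hc₂def, hceq]
        exact reach_lift (c 0) hr2
      have hc21 : c₂ 1 = d' 0 := by
        show Fin.cases (c 0) d' (1 : Fin (n+2)) = d' 0
        rw [← Fin.succ_zero_eq_one, Fin.cases_succ]
      have hc20 : c₂ 0 = c 0 := by simp [hc₂def]
      have hc2s : ∀ i : Fin (n+1), c₂ i.succ = d' i := by intro i; simp [hc₂def]
      obtain ⟨c₃, hr3, h3u, h3v, h3w⟩ :=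
        reach_shift (pathGraph (n+2)) 1 0 adj01.symm (t - c 0)
          c₂ (by rw [hc21]; omega)
      refine ⟨c₃, hr2'.trans hr3, ?_, ?_⟩
      · rw [h3v, hc20]; omega
      · intro v
        induction v using Fin.cases with
        | zero => rw [h3v, hc20]; omega
        | succ i =>
          by_cases hi : i = 0
          · subst hi
            rw [Fin.succ_zero_eq_one, h3u, hc21]
            omega
          · have hne1 : i.succ ≠ (1 : Fin (n+2)) := by
              rw [← Fin.succ_zero_eq_one]
              exact fun h => hi (Fin.succ_injective _ h)
            rw [h3w i.succ hne1 (Fin.succ_ne_zero i), hc2s i]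
            exact hdall i


theorem coverPebblingNumber_pathGraph (n : ℕ) (hn : 1 ≤ n) :
    coverPebblingNumber (pathGraph n) = ((2 ^ n - 1 : ℕ) : ℕ∞) := by
  obtain ⟨m, rfl⟩ : ∃ m, n = m + 1 := ⟨n - 1, by omega⟩
  have hpow2 : 2 ≤ 2 ^ (m + 1) := by
    calc 2 = 2 ^ 1 := by norm_num
    _ ≤ 2 ^ (m + 1) := Nat.pow_le_pow_right (by norm_num) (by omega)
  rw [coverPebblingNumber]
  apply le_antisymm
  · apply sInf_le
    refine ⟨2 ^ (m + 1) - 1, ?_, rfl⟩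
    intro c hc
    have hbound : 2 ^ m * (1 + 1) - 1 ≤ ∑ v, c v := by
      rw [hc]
      have : (2 : ℕ) ^ (m + 1) = 2 ^ m * 2 := by rw [pow_succ]
      omega
    obtain ⟨c', hr, _, hall⟩ := main_lemma m 1 le_rfl c hbound
    exact ⟨c', hr, hall⟩
  · apply le_sInf
    rintro b ⟨k, hk, rfl⟩
    rw [Nat.cast_le]
    by_contra hlt
    push_neg at hlt
    have hk2 : k ≤ 2 ^ (m + 1) - 2 := by omega
    obtain ⟨c', hr, hall⟩ := hk (fun v => if v = 0 then k else 0) (by simp)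
    exact not_solvable hk2 hr hall
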